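/- For each n ∈ ℕ, let 𝒯_n be a hierarchy on a finite set V_n, S₀^{(n)} ⊆ V_n, and let p_adj^{C,(b),n} : Ω_n → [0,1] (C ∈ 𝒯_n, b = 1,…,B_n) be random variables on a probability space (Ω_n, ℱ_n, ℙ_n). Assume for each n there is a measurable event A_n with ℙ_n(A_n) → 1 as n → ∞, such that for every b ∈ {1,…,B_n} and every t ∈ (0,1), ∑_{C ∈ 𝒯̃₀^{(n)}} ℙ_n({p_adj^{C,(b),n} ≤ t} ∩ A_n) ≤ t. Then for every fixed γ ∈ (0,1) and every α ∈ (0,1): limsup_{n→∞} ℙ_n(∃ C ∈ 𝒯₀^{(n)} with Q_h^{C,n}(γ) ≤ α) ≤ α, and limsup_{n→∞} ℙ_n(∃ C ∈ 𝒯₀^{(n)} with P_h^{C,n} ≤ α) ≤ α. -/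

import Mathlib

open MeasureTheory Finset

/-- A hierarchy on a finite set `V`: a finite collection of nonempty subsets of `V`
containing `V` itself, such that any two members are nested or disjoint. -/
def IsHierarchy {ι : Type*} [DecidableEq ι] (V : Finset ι) (𝒯 : Finset (Finset ι)) : Prop :=
  V ∈ 𝒯 ∧ (∀ C ∈ 𝒯, C.Nonempty ∧ C ⊆ V) ∧
    ∀ C ∈ 𝒯, ∀ D ∈ 𝒯, C ⊆ D ∨ D ⊆ C ∨ C ∩ D = ∅

/-- The null clusters: members of the hierarchy not meeting the active set `S₀`. -/
def nullClusters {ι : Type*} [DecidableEq ι] (𝒯 : Finset (Finset ι)) (S₀ : Finset ι) :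
    Finset (Finset ι) :=
  𝒯.filter (fun C => C ∩ S₀ = ∅)

/-- The maximal null clusters: null clusters which are not strictly contained
in another null cluster. -/
def maxNullClusters {ι : Type*} [DecidableEq ι] (𝒯 : Finset (Finset ι)) (S₀ : Finset ι) :
    Finset (Finset ι) :=
  (nullClusters 𝒯 S₀).filter (fun C => ∀ D ∈ nullClusters 𝒯 S₀, ¬ C ⊂ D)

/-- The empirical `γ`-quantile of `a 1, …, a B`: the `⌈γ B⌉`-th smallest of the values. -/
noncomputable def empQuantile (γ : ℝ) {B : ℕ} (a : Fin B → ℝ) : ℝ :=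
  sInf {x : ℝ | ⌈γ * B⌉₊ ≤ (Finset.univ.filter (fun b => a b ≤ x)).card}

/-- The aggregated p-value `Q^C(γ) = min (1, q_γ({p_adj^{C,(b)}/γ}))`. -/
noncomputable def Qagg {ι : Type*} {Ω : Type*} {B : ℕ}
    (p : Finset ι → Fin B → Ω → ℝ) (γ : ℝ) (C : Finset ι) (ω : Ω) : ℝ :=
  min 1 (empQuantile γ (fun b => p C b ω / γ))

/-- The hierarchically adjusted aggregated p-value
`Q_h^C(γ) = max {Q^D(γ) : D ∈ 𝒯, C ⊆ D}` (for `C ∈ 𝒯`). -/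
noncomputable def Qhier {ι : Type*} [DecidableEq ι] {Ω : Type*} {B : ℕ}
    (𝒯 : Finset (Finset ι)) (p : Finset ι → Fin B → Ω → ℝ) (γ : ℝ)
    (C : Finset ι) (ω : Ω) : ℝ :=
  (insert C (𝒯.filter (fun D => C ⊆ D))).sup' (Finset.insert_nonempty _ _)
    (fun D => Qagg p γ D ω)


/-- The γ-free p-value `P^C = min (1, (1 - log γ_min) · inf_{γ ∈ (γ_min,1)} Q^C(γ))`. -/
noncomputable def Pval {ι : Type*} {Ω : Type*} {B : ℕ}
    (p : Finset ι → Fin B → Ω → ℝ) (γmin : ℝ) (C : Finset ι) (ω : Ω) : ℝ :=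
  min 1 ((1 - Real.log γmin) * sInf ((fun γ => Qagg p γ C ω) '' Set.Ioo γmin 1))

/-- The hierarchically adjusted γ-free p-value `P_h^C = max {P^D : D ∈ 𝒯, C ⊆ D}`
(for `C ∈ 𝒯`). -/
noncomputable def Phier {ι : Type*} [DecidableEq ι] {Ω : Type*} {B : ℕ}
    (𝒯 : Finset (Finset ι)) (p : Finset ι → Fin B → Ω → ℝ) (γmin : ℝ)
    (C : Finset ι) (ω : Ω) : ℝ :=
  (insert C (𝒯.filter (fun D => C ⊆ D))).sup' (Finset.insert_nonempty _ _)
    (fun D => Pval p γmin D ω)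



/-! ### Auxiliary lemmas -/

section Aux

open Filter

lemma count_mono {B : ℕ} (a : Fin B → ℝ) {x y : ℝ} (h : x ≤ y) :
    (Finset.univ.filter (fun b => a b ≤ x)).card ≤
      (Finset.univ.filter (fun b => a b ≤ y)).card := by
  apply Finset.card_le_card
  intro b hb
  simp only [Finset.mem_filter] at *
  exact ⟨hb.1, hb.2.trans h⟩

lemma empQuantile_le_iff {B : ℕ} (hB : 0 < B) {γ : ℝ} (a : Fin B → ℝ)
    (hk1 : 1 ≤ ⌈γ * B⌉₊) (hkB : ⌈γ * B⌉₊ ≤ B) (x : ℝ) :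
    empQuantile γ a ≤ x ↔ ⌈γ * B⌉₊ ≤ (Finset.univ.filter (fun b => a b ≤ x)).card := by
  haveI : Nonempty (Fin B) := Fin.pos_iff_nonempty.mp hB
  set k := ⌈γ * B⌉₊ with hk
  set S : Set ℝ := {x : ℝ | k ≤ (Finset.univ.filter (fun b => a b ≤ x)).card} with hS
  have hSne : S.Nonempty := by
    refine ⟨Finset.univ.sup' Finset.univ_nonempty a, ?_⟩
    have : (Finset.univ.filter (fun b => a b ≤ Finset.univ.sup' Finset.univ_nonempty a)) =
        Finset.univ := by
      apply Finset.filter_true_of_mem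
      intro b _
      exact Finset.le_sup' a (Finset.mem_univ b)
    simp only [hS, Set.mem_setOf_eq, this, Finset.card_univ, Fintype.card_fin]
    exact hkB
  have hSbdd : BddBelow S := by
    refine ⟨Finset.univ.inf' Finset.univ_nonempty a, ?_⟩
    intro y hy
    have hcard : 0 < (Finset.univ.filter (fun b => a b ≤ y)).card := lt_of_lt_of_le hk1 hy
    obtain ⟨b, hb⟩ := Finset.card_pos.mp hcard
    simp only [Finset.mem_filter] at hb
    exact le_trans (Finset.inf'_le a (Finset.mem_univ b)) hb.2
  constructor
  · intro h
    have hmem : sInf S ∈ S := by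
      by_contra hnot
      simp only [hS, Set.mem_setOf_eq, not_le] at hnot
      set m := sInf S
      have hTne : (Finset.univ.filter (fun b => m < a b)).Nonempty := by
        by_contra hT
        rw [Finset.not_nonempty_iff_eq_empty] at hT
        have hall : (Finset.univ.filter (fun b => a b ≤ m)) = Finset.univ := by
          apply Finset.filter_true_of_mem
          intro b _
          by_contra hb
          have : b ∈ Finset.univ.filter (fun b => m < a b) := by
            simp only [Finset.mem_filter]
            exact ⟨Finset.mem_univ b, not_le.mp hb⟩
          simp [hT] at this
        rw [hall] at hnot
        simp only [Finset.card_univ, Fintype.card_fin] at hnot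
        exact absurd hkB (not_le.mpr hnot)
      set m' := (Finset.univ.filter (fun b => m < a b)).inf' hTne a with hm'
      have hm'lb : ∀ y ∈ S, m' ≤ y := by
        intro y hy
        have hcount : (Finset.univ.filter (fun b => a b ≤ m)).card <
            (Finset.univ.filter (fun b => a b ≤ y)).card := lt_of_lt_of_le hnot hy
        obtain ⟨b, hb, hbm⟩ : ∃ b ∈ Finset.univ.filter (fun b => a b ≤ y),
            b ∉ Finset.univ.filter (fun b => a b ≤ m) := by
          by_contra hcon
          push_neg at hcon
          exact absurd (Finset.card_le_card hcon) (not_le.mpr hcount)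
        simp only [Finset.mem_filter, Finset.mem_univ, true_and, not_le] at hb hbm
        exact le_trans (Finset.inf'_le a (by simp [Finset.mem_filter, hbm])) hb
      have hm'm : m' ≤ m := le_csInf hSne hm'lb
      obtain ⟨b, hb, hbe⟩ := Finset.exists_mem_eq_inf' hTne a
      simp only [Finset.mem_filter, Finset.mem_univ, true_and] at hb
      rw [hm'] at hm'm
      rw [hbe] at hm'm
      exact absurd hm'm (not_le.mpr hb)
    calc k ≤ (Finset.univ.filter (fun b => a b ≤ sInf S)).card := hmem
    _ ≤ _ := count_mono a h
  · intro h
    exact csInf_le hSbdd h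

lemma ceil_pos_le {B : ℕ} (hB : 0 < B) {γ : ℝ} (hγ0 : 0 < γ) (hγ1 : γ < 1) :
    1 ≤ ⌈γ * B⌉₊ ∧ ⌈γ * B⌉₊ ≤ B := by
  constructor
  · rw [Nat.one_le_iff_ne_zero, ← Nat.pos_iff_ne_zero, Nat.ceil_pos]
    positivity
  · rw [Nat.ceil_le]
    calc γ * B ≤ 1 * B := by
          apply mul_le_mul_of_nonneg_right hγ1.le (Nat.cast_nonneg B)
      _ = B := one_mul _

lemma Qagg_le_count {ι Ω : Type*} {B : ℕ} (hB : 0 < B) {γ x : ℝ} (hγ0 : 0 < γ)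
    (hγ1 : γ < 1) (hx1 : x < 1) (p : Finset ι → Fin B → Ω → ℝ) (C : Finset ι) (ω : Ω)
    (h : Qagg p γ C ω ≤ x) :
    ⌈γ * B⌉₊ ≤ (Finset.univ.filter (fun b => p C b ω ≤ γ * x)).card := by
  obtain ⟨hk1, hkB⟩ := ceil_pos_le hB hγ0 hγ1
  have hq : empQuantile γ (fun b => p C b ω / γ) ≤ x := by
    by_contra hq
    push_neg at hq
    have : x < min 1 (empQuantile γ (fun b => p C b ω / γ)) := lt_min hx1 hq
    exact absurd h (not_le.mpr this)
  have hcount := (empQuantile_le_iff hB _ hk1 hkB x).mp hq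
  convert hcount using 2
  ext b
  simp only [Finset.mem_filter, Finset.mem_univ, true_and]
  rw [div_le_iff₀ hγ0, mul_comm]

lemma Qagg_nonneg {ι Ω : Type*} {B : ℕ} (hB : 0 < B) {γ : ℝ} (hγ0 : 0 < γ)
    (p : Finset ι → Fin B → Ω → ℝ) (C : Finset ι) (ω : Ω)
    (hp : ∀ b, 0 ≤ p C b ω) : 0 ≤ Qagg p γ C ω := by
  apply le_min zero_le_one
  apply Real.sInf_nonneg
  intro y hy
  simp only [Set.mem_setOf_eq] at hy
  have hk1 : 1 ≤ ⌈γ * B⌉₊ := by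
    rw [Nat.one_le_iff_ne_zero, ← Nat.pos_iff_ne_zero, Nat.ceil_pos]
    positivity
  have hpos : 0 < (Finset.univ.filter (fun b => p C b ω / γ ≤ y)).card :=
    lt_of_lt_of_le hk1 hy
  obtain ⟨b, hb⟩ := Finset.card_pos.mp hpos
  simp only [Finset.mem_filter] at hb
  exact le_trans (div_nonneg (hp b) hγ0.le) hb.2

lemma Pval_le_exists_k' {ι Ω : Type*} {B : ℕ} (hB : 0 < B) {γmin α u' : ℝ}
    (hγmin : γmin ∈ Set.Ioo (0:ℝ) 1) (hα : α ∈ Set.Ioo (0:ℝ) 1)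
    (hu' : α / (1 - Real.log γmin) < u') (hu'1 : u' < 1)
    (p : Finset ι → Fin B → Ω → ℝ) (C : Finset ι) (ω : Ω)
    (hp : ∀ b, 0 ≤ p C b ω)
    (h : Pval p γmin C ω ≤ α) :
    ∃ k, (⌊γmin * B⌋₊ + 1 ≤ k ∧ k ≤ B) ∧
      k ≤ (Finset.univ.filter (fun b => p C b ω ≤ (k : ℝ) * u' / B)).card := by
  have hlog : Real.log γmin < 0 := Real.log_neg hγmin.1 hγmin.2
  have hfac : (0:ℝ) < 1 - Real.log γmin := by linarith
  have hu'0 : 0 < u' := lt_trans (div_pos hα.1 hfac) hu'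
  have hPv : (1 - Real.log γmin) * sInf ((fun γ => Qagg p γ C ω) '' Set.Ioo γmin 1) ≤ α := by
    by_contra hq
    push_neg at hq
    exact absurd h (not_le.mpr (lt_min hα.2 hq))
  have hsInf : sInf ((fun γ => Qagg p γ C ω) '' Set.Ioo γmin 1) ≤ α / (1 - Real.log γmin) :=
    (le_div_iff₀' hfac).mpr hPv
  have hne : ((fun γ => Qagg p γ C ω) '' Set.Ioo γmin 1).Nonempty :=
    (Set.nonempty_Ioo.mpr hγmin.2).image _
  have hbdd : BddBelow ((fun γ => Qagg p γ C ω) '' Set.Ioo γmin 1) := by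
    refine ⟨0, fun y hy => ?_⟩
    obtain ⟨γ', hγ', rfl⟩ := hy
    exact Qagg_nonneg hB (hγmin.1.trans hγ'.1) p C ω hp
  have hlt : sInf ((fun γ => Qagg p γ C ω) '' Set.Ioo γmin 1) < u' := lt_of_le_of_lt hsInf hu'
  obtain ⟨y, hy, hyu⟩ := (csInf_lt_iff hbdd hne).mp hlt
  obtain ⟨γ', hγ', rfl⟩ := hy
  have hγ'0 : 0 < γ' := hγmin.1.trans hγ'.1
  have hcount := Qagg_le_count hB hγ'0 hγ'.2 hu'1 p C ω hyu.le
  refine ⟨⌈γ' * B⌉₊, ⟨?_, (ceil_pos_le hB hγ'0 hγ'.2).2⟩, ?_⟩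
  · rw [Nat.add_one_le_iff, Nat.floor_lt (mul_nonneg hγmin.1.le (Nat.cast_nonneg B))]
    calc γmin * B < γ' * B :=
          mul_lt_mul_of_pos_right hγ'.1 (by exact_mod_cast hB)
      _ ≤ (⌈γ' * B⌉₊ : ℝ) := Nat.le_ceil _
  · refine le_trans hcount (count_mono _ ?_)
    rw [div_eq_mul_inv, mul_comm ((⌈γ' * B⌉₊ : ℝ) * u'), ← mul_assoc]
    apply mul_le_mul_of_nonneg_right _ hu'0.le
    rw [← div_eq_inv_mul (⌈γ' * B⌉₊:ℝ), le_div_iff₀ (by exact_mod_cast hB)]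
    calc γ' * B ≤ (⌈γ' * B⌉₊ : ℝ) := Nat.le_ceil _

lemma exists_maxNull {ι : Type*} [DecidableEq ι] {𝒯 : Finset (Finset ι)} {S₀ : Finset ι}
    {C : Finset ι} (hC : C ∈ nullClusters 𝒯 S₀) :
    ∃ D ∈ maxNullClusters 𝒯 S₀, C ⊆ D := by
  classical
  set N := (nullClusters 𝒯 S₀).filter (fun D => C ⊆ D) with hN
  have hNne : N.Nonempty := ⟨C, by simp [hN, hC]⟩
  obtain ⟨D, hD, hDmax⟩ := Finset.exists_max_image N Finset.card hNne
  simp only [hN, Finset.mem_filter] at hD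
  refine ⟨D, ?_, hD.2⟩
  rw [maxNullClusters, Finset.mem_filter]
  refine ⟨hD.1, fun D' hD' hss => ?_⟩
  have hD'N : D' ∈ N := by
    simp only [hN, Finset.mem_filter]
    exact ⟨hD', hD.2.trans hss.subset⟩
  exact absurd (hDmax D' hD'N) (not_le.mpr (Finset.card_lt_card hss))

lemma maxNull_subset {ι : Type*} [DecidableEq ι] {𝒯 : Finset (Finset ι)} {S₀ : Finset ι} :
    maxNullClusters 𝒯 S₀ ⊆ 𝒯 :=
  (Finset.filter_subset _ _).trans (Finset.filter_subset _ _)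

lemma meas_inter_le_setLIntegral {Ω : Type*} [MeasurableSpace Ω] (μ : Measure Ω)
    {A : Set Ω} {g : Ω → ENNReal} (hg : Measurable g)
    {S : Set Ω} (hS : ∀ ω ∈ S, 1 ≤ g ω) :
    μ (S ∩ A) ≤ ∫⁻ ω in A, g ω ∂μ := by
  set T : Set Ω := {ω | 1 ≤ g ω} with hT
  have hTm : MeasurableSet T := measurableSet_le measurable_const hg
  have h1 : μ (S ∩ A) ≤ μ (T ∩ A) :=
    measure_mono (Set.inter_subset_inter_left A hS)
  have h2 : μ (T ∩ A) = ∫⁻ ω in A, T.indicator (fun _ => (1 : ENNReal)) ω ∂μ := by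
    rw [lintegral_indicator hTm, setLIntegral_const, one_mul, Measure.restrict_apply hTm]
  have h3 : ∫⁻ ω in A, T.indicator (fun _ => (1 : ENNReal)) ω ∂μ ≤ ∫⁻ ω in A, g ω ∂μ := by
    apply lintegral_mono
    intro ω
    by_cases hω : ω ∈ T
    · rw [Set.indicator_of_mem hω]; exact hω
    · simp [Set.indicator_of_notMem hω]
  exact h1.trans (h2 ▸ h3)

lemma core_bound {ι Ω : Type*} [DecidableEq ι] [MeasurableSpace Ω] (μ : Measure Ω)
    {A : Set Ω} {B : ℕ} {𝒟 : Finset (Finset ι)}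
    (p : Finset ι → Fin B → Ω → ℝ) (hmeas : ∀ D ∈ 𝒟, ∀ b, Measurable (p D b))
    (K : Finset ℕ) (w t : ℕ → ℝ)
    (hsum : ∀ (b : Fin B), ∀ k ∈ K,
      ∑ D ∈ 𝒟, μ ({ω | p D b ω ≤ t k} ∩ A) ≤ ENNReal.ofReal (t k))
    (F : Finset ι → Set Ω)
    (hF : ∀ D ∈ 𝒟, ∀ ω ∈ F D, 1 ≤ ∑ k ∈ K, ENNReal.ofReal (w k) *
      ∑ b : Fin B, ({ω' | p D b ω' ≤ t k}).indicator (fun _ => (1:ENNReal)) ω) :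
    μ ((⋃ D ∈ 𝒟, F D) ∩ A) ≤
      ∑ k ∈ K, ENNReal.ofReal (w k) * ((B : ENNReal) * ENNReal.ofReal (t k)) := by
  classical
  have hmeasSet : ∀ D ∈ 𝒟, ∀ (b : Fin B) (k : ℕ),
      MeasurableSet {ω | p D b ω ≤ t k} := fun D hD b k =>
    measurableSet_le (hmeas D hD b) measurable_const
  set g : Finset ι → Ω → ENNReal := fun D ω => ∑ k ∈ K, ENNReal.ofReal (w k) *
      ∑ b : Fin B, ({ω' | p D b ω' ≤ t k}).indicator (fun _ => (1:ENNReal)) ω with hg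
  have hgmeas : ∀ D ∈ 𝒟, Measurable (g D) := by
    intro D hD
    apply Finset.measurable_sum
    intro k _
    apply Measurable.const_mul
    apply Finset.measurable_sum
    intro b _
    exact measurable_const.indicator (hmeasSet D hD b k)
  have step1 : μ ((⋃ D ∈ 𝒟, F D) ∩ A) ≤ ∑ D ∈ 𝒟, μ (F D ∩ A) := by
    have hU : (⋃ D ∈ 𝒟, F D) ∩ A = ⋃ D ∈ 𝒟, (F D ∩ A) := by
      rw [Set.iUnion₂_inter]
    rw [hU]
    exact measure_biUnion_finset_le 𝒟 _
  have step2 : ∀ D ∈ 𝒟, μ (F D ∩ A) ≤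
      ∑ k ∈ K, ENNReal.ofReal (w k) * ∑ b : Fin B, μ ({ω | p D b ω ≤ t k} ∩ A) := by
    intro D hD
    refine (meas_inter_le_setLIntegral μ (hgmeas D hD) (hF D hD)).trans ?_
    rw [lintegral_finset_sum _ (fun k _ => by
      apply Measurable.const_mul
      apply Finset.measurable_sum
      intro b _
      exact measurable_const.indicator (hmeasSet D hD b k))]
    apply Finset.sum_le_sum
    intro k _
    rw [lintegral_const_mul _ (Finset.measurable_sum _ (fun b _ =>
      measurable_const.indicator (hmeasSet D hD b k)))]
    apply mul_le_mul_right
    rw [lintegral_finset_sum _ (fun b _ => measurable_const.indicator (hmeasSet D hD b k))]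
    apply Finset.sum_le_sum
    intro b _
    rw [lintegral_indicator (hmeasSet D hD b k), setLIntegral_const, one_mul,
      Measure.restrict_apply (hmeasSet D hD b k)]
  calc μ ((⋃ D ∈ 𝒟, F D) ∩ A) ≤ ∑ D ∈ 𝒟, μ (F D ∩ A) := step1
    _ ≤ ∑ D ∈ 𝒟, ∑ k ∈ K, ENNReal.ofReal (w k) *
        ∑ b : Fin B, μ ({ω | p D b ω ≤ t k} ∩ A) := Finset.sum_le_sum step2
    _ = ∑ k ∈ K, ENNReal.ofReal (w k) *
        ∑ b : Fin B, ∑ D ∈ 𝒟, μ ({ω | p D b ω ≤ t k} ∩ A) := by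
        rw [Finset.sum_comm]
        congr 1
        ext k
        rw [← Finset.mul_sum, Finset.sum_comm]
    _ ≤ ∑ k ∈ K, ENNReal.ofReal (w k) * ((B : ENNReal) * ENNReal.ofReal (t k)) := by
        apply Finset.sum_le_sum
        intro k hk
        apply mul_le_mul_right
        calc ∑ b : Fin B, ∑ D ∈ 𝒟, μ ({ω | p D b ω ≤ t k} ∩ A)
            ≤ ∑ _b : Fin B, ENNReal.ofReal (t k) :=
              Finset.sum_le_sum (fun b _ => hsum b k hk)
          _ = (B : ENNReal) * ENNReal.ofReal (t k) := by
              rw [Finset.sum_const, Finset.card_univ, Fintype.card_fin, nsmul_eq_mul]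

noncomputable def wt (B k : ℕ) : ℝ := if k < B then 1/k - 1/(k+1) else 1/B

lemma wt_nonneg {B k : ℕ} (hk : 1 ≤ k) : 0 ≤ wt B k := by
  unfold wt
  split
  · rw [sub_nonneg]
    apply one_div_le_one_div_of_le
    · exact_mod_cast hk
    · push_cast; linarith
  · positivity

lemma tele_Ico (f : ℕ → ℝ) {m n : ℕ} (h : m ≤ n) :
    ∑ k ∈ Finset.Ico m n, (f (k + 1) - f k) = f n - f m := by
  rw [Finset.sum_Ico_eq_sub _ h, Finset.sum_range_sub, Finset.sum_range_sub]
  ring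

lemma tele_wt {B k' : ℕ} (hk'1 : 1 ≤ k') (hk'B : k' ≤ B) :
    ∑ k ∈ Finset.Icc k' B, wt B k = 1 / k' := by
  rw [← Finset.Ico_add_one_right_eq_Icc, Finset.sum_Ico_succ_top hk'B]
  set f : ℕ → ℝ := fun j => -(1/(j:ℝ)) with hf
  have h1 : ∀ k ∈ Finset.Ico k' B, wt B k = f (k+1) - f k := by
    intro k hk
    rw [Finset.mem_Ico] at hk
    simp only [wt, if_pos hk.2, hf]
    push_cast
    ring
  rw [Finset.sum_congr rfl h1, tele_Ico f hk'B]
  have h2 : wt B B = 1 / B := by simp [wt]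
  rw [h2, hf]
  simp only
  ring

lemma one_le_weighted {B k₀ k' : ℕ} (hk₀ : 1 ≤ k₀) (hk' : k' ∈ Finset.Icc k₀ B)
    (N : ℕ → ℕ) (hmono : ∀ k l, k ≤ l → N k ≤ N l) (hNk' : k' ≤ N k') :
    1 ≤ ∑ k ∈ Finset.Icc k₀ B, wt B k * (N k : ℝ) := by
  rw [Finset.mem_Icc] at hk'
  have hk'1 : 1 ≤ k' := hk₀.trans hk'.1
  have hsub : Finset.Icc k' B ⊆ Finset.Icc k₀ B := Finset.Icc_subset_Icc_left hk'.1
  have h1 : ∑ k ∈ Finset.Icc k' B, wt B k * (N k : ℝ) ≤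
      ∑ k ∈ Finset.Icc k₀ B, wt B k * (N k : ℝ) := by
    apply Finset.sum_le_sum_of_subset_of_nonneg hsub
    intro k hk _
    rw [Finset.mem_Icc] at hk
    exact mul_nonneg (wt_nonneg (hk₀.trans hk.1)) (Nat.cast_nonneg _)
  refine le_trans ?_ h1
  have h2 : ∑ k ∈ Finset.Icc k' B, wt B k * (N k' : ℝ) ≤
      ∑ k ∈ Finset.Icc k' B, wt B k * (N k : ℝ) := by
    apply Finset.sum_le_sum
    intro k hk
    rw [Finset.mem_Icc] at hk
    exact mul_le_mul_of_nonneg_left (Nat.cast_le.mpr (hmono _ _ hk.1))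
      (wt_nonneg (hk'1.trans hk.1))
  refine le_trans ?_ h2
  rw [← Finset.sum_mul, tele_wt hk'1 hk'.2, one_div, ← div_eq_inv_mul,
    le_div_iff₀ (by exact_mod_cast hk'1), one_mul]
  exact_mod_cast hNk'

lemma harm_sum_le {B k₀ : ℕ} (hk₀ : 1 ≤ k₀) (hk₀B : k₀ ≤ B) :
    ∑ k ∈ Finset.Ico k₀ B, (1 / ((k:ℝ) + 1)) ≤ Real.log B - Real.log k₀ := by
  have h1 : ∀ k ∈ Finset.Ico k₀ B, (1 / ((k:ℝ)+1)) ≤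
      (fun j : ℕ => Real.log j) (k+1) - (fun j : ℕ => Real.log j) k := by
    intro k hk
    rw [Finset.mem_Ico] at hk
    have hkpos : (0:ℝ) < k := by
      exact_mod_cast Nat.lt_of_lt_of_le Nat.zero_lt_one (hk₀.trans hk.1)
    have hk1pos : (0:ℝ) < (k:ℝ) + 1 := by linarith
    have hlog : Real.log ((k:ℝ) / ((k:ℝ)+1)) ≤ (k:ℝ)/((k:ℝ)+1) - 1 :=
      Real.log_le_sub_one_of_pos (by positivity)
    rw [Real.log_div (ne_of_gt hkpos) (ne_of_gt hk1pos)] at hlog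
    have heq : (k:ℝ)/((k:ℝ)+1) - 1 = -(1/((k:ℝ)+1)) := by
      field_simp
      ring
    rw [heq] at hlog
    simp only
    push_cast
    linarith
  calc ∑ k ∈ Finset.Ico k₀ B, (1 / ((k:ℝ) + 1))
      ≤ ∑ k ∈ Finset.Ico k₀ B,
        ((fun j : ℕ => Real.log j) (k+1) - (fun j : ℕ => Real.log j) k) :=
        Finset.sum_le_sum h1
    _ = Real.log B - Real.log k₀ := by
        simpa using tele_Ico (fun j : ℕ => Real.log j) hk₀B

lemma numeric2 {B k₀ : ℕ} (hk₀1 : 1 ≤ k₀) (hk₀B : k₀ ≤ B) {γmin u' : ℝ}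
    (hγ0 : 0 < γmin) (hlb : γmin * B ≤ k₀) (hu' : 0 ≤ u') :
    ∑ k ∈ Finset.Icc k₀ B, wt B k * ((B:ℝ) * ((k:ℝ) * u' / B)) ≤
      u' * (1 - Real.log γmin) := by
  have hB : 0 < B := hk₀1.trans hk₀B
  have hBR : (0:ℝ) < B := by exact_mod_cast hB
  have heq : ∀ k ∈ Finset.Icc k₀ B, wt B k * ((B:ℝ) * ((k:ℝ) * u' / B)) =
      (wt B k * k) * u' := by
    intro k _
    field_simp
  rw [Finset.sum_congr rfl heq, ← Finset.sum_mul]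
  have hkey : ∑ k ∈ Finset.Icc k₀ B, wt B k * (k:ℝ) ≤ 1 - Real.log γmin := by
    rw [← Finset.Ico_add_one_right_eq_Icc, Finset.sum_Ico_succ_top hk₀B]
    have hBB : wt B B * (B:ℝ) = 1 := by
      simp only [wt, lt_self_iff_false, if_false]
      field_simp
    have hIco : ∀ k ∈ Finset.Ico k₀ B, wt B k * (k:ℝ) = 1/((k:ℝ)+1) := by
      intro k hk
      rw [Finset.mem_Ico] at hk
      have hk1 : 1 ≤ k := hk₀1.trans hk.1
      have hkR : (0:ℝ) < k := by exact_mod_cast hk1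
      simp only [wt, if_pos hk.2]
      push_cast
      field_simp
      ring
    rw [hBB, Finset.sum_congr rfl hIco]
    have h2 := harm_sum_le hk₀1 hk₀B
    have h3 : Real.log B - Real.log k₀ ≤ - Real.log γmin := by
      have hlogk₀ : Real.log (γmin * B) ≤ Real.log k₀ :=
        Real.log_le_log (by positivity) hlb
      rw [Real.log_mul (ne_of_gt hγ0) (ne_of_gt hBR)] at hlogk₀
      linarith
    linarith
  calc (∑ k ∈ Finset.Icc k₀ B, wt B k * (k:ℝ)) * u' ≤ (1 - Real.log γmin) * u' :=
        mul_le_mul_of_nonneg_right hkey hu'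
    _ = u' * (1 - Real.log γmin) := mul_comm _ _

lemma sum_indicator_count {Ω : Type*} {B : ℕ} (f : Fin B → Ω → ℝ) (t : ℝ) (ω : Ω) :
    ∑ b : Fin B, ({ω' | f b ω' ≤ t}).indicator (fun _ => (1:ENNReal)) ω =
      ((Finset.univ.filter (fun b => f b ω ≤ t)).card : ENNReal) := by
  classical
  simp only [Set.indicator_apply, Set.mem_setOf_eq]
  rw [Finset.sum_boole]

lemma one_le_ofReal_sum {K : Finset ℕ} {w : ℕ → ℝ} {N : ℕ → ℕ}
    (hw : ∀ k ∈ K, 0 ≤ w k) (h : 1 ≤ ∑ k ∈ K, w k * (N k : ℝ)) :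
    1 ≤ ∑ k ∈ K, ENNReal.ofReal (w k) * (N k : ENNReal) := by
  have h1 : (1:ENNReal) = ENNReal.ofReal 1 := ENNReal.ofReal_one.symm
  rw [h1]
  calc ENNReal.ofReal 1 ≤ ENNReal.ofReal (∑ k ∈ K, w k * (N k : ℝ)) :=
        ENNReal.ofReal_le_ofReal h
    _ = ∑ k ∈ K, ENNReal.ofReal (w k * (N k : ℝ)) :=
        ENNReal.ofReal_sum_of_nonneg (fun k hk => mul_nonneg (hw k hk) (Nat.cast_nonneg _))
    _ = ∑ k ∈ K, ENNReal.ofReal (w k) * (N k : ENNReal) := by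
        apply Finset.sum_congr rfl
        intro k hk
        rw [ENNReal.ofReal_mul (hw k hk), ENNReal.ofReal_natCast]

lemma sum_ofReal_mul_eq {K : Finset ℕ} (w t : ℕ → ℝ) (B : ℕ)
    (hw : ∀ k ∈ K, 0 ≤ w k) (ht : ∀ k ∈ K, 0 ≤ t k) :
    ∑ k ∈ K, ENNReal.ofReal (w k) * ((B:ENNReal) * ENNReal.ofReal (t k)) =
      ENNReal.ofReal (∑ k ∈ K, w k * ((B:ℝ) * t k)) := by
  rw [ENNReal.ofReal_sum_of_nonneg (fun k hk =>
    mul_nonneg (hw k hk) (mul_nonneg (Nat.cast_nonneg _) (ht k hk)))]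
  apply Finset.sum_congr rfl
  intro k hk
  rw [ENNReal.ofReal_mul (hw k hk), ENNReal.ofReal_mul (Nat.cast_nonneg B),
    ENNReal.ofReal_natCast]

end Aux

section Parts

open Filter

lemma part1_bound {ι Ω : Type*} [DecidableEq ι] [MeasurableSpace Ω] (μ : Measure Ω)
    {A : Set Ω} (𝒯 : Finset (Finset ι)) (S₀ : Finset ι)
    {B : ℕ} (hB : 0 < B) (p : Finset ι → Fin B → Ω → ℝ)
    (hmeas : ∀ C ∈ 𝒯, ∀ b : Fin B, Measurable (p C b))
    (hsuper : ∀ b : Fin B, ∀ t ∈ Set.Ioo (0:ℝ) 1,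
      ∑ C ∈ maxNullClusters 𝒯 S₀, μ ({ω | p C b ω ≤ t} ∩ A) ≤ ENNReal.ofReal t)
    {γ α : ℝ} (hγ : γ ∈ Set.Ioo (0:ℝ) 1) (hα : α ∈ Set.Ioo (0:ℝ) 1) :
    μ ({ω | ∃ C ∈ nullClusters 𝒯 S₀, Qhier 𝒯 p γ C ω ≤ α} ∩ A) ≤ ENNReal.ofReal α := by
  classical
  obtain ⟨hk11, hk1B⟩ := ceil_pos_le hB hγ.1 hγ.2
  set k₁ := ⌈γ * B⌉₊ with hk₁
  have hk1R : (0:ℝ) < k₁ := by exact_mod_cast hk11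
  have hγα : γ * α ∈ Set.Ioo (0:ℝ) 1 := by
    constructor
    · exact mul_pos hγ.1 hα.1
    · calc γ * α < 1 * α := mul_lt_mul_of_pos_right hγ.2 hα.1
        _ = α := one_mul α
        _ < 1 := hα.2
  set F : Finset ι → Set Ω := fun D => {ω | Qagg p γ D ω ≤ α} with hF
  have hincl : {ω | ∃ C ∈ nullClusters 𝒯 S₀, Qhier 𝒯 p γ C ω ≤ α} ⊆
      ⋃ D ∈ maxNullClusters 𝒯 S₀, F D := by
    intro ω hω
    simp only [Set.mem_setOf_eq] at hω
    obtain ⟨C, hC, hQ⟩ := hω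
    obtain ⟨D, hD, hCD⟩ := exists_maxNull hC
    have hD𝒯 : D ∈ 𝒯 := maxNull_subset hD
    have hmem : D ∈ insert C (𝒯.filter (fun D' => C ⊆ D')) :=
      Finset.mem_insert_of_mem (Finset.mem_filter.mpr ⟨hD𝒯, hCD⟩)
    have hle := Finset.le_sup' (fun D' => Qagg p γ D' ω) hmem
    exact Set.mem_biUnion hD (le_trans hle hQ)
  have hcore := core_bound μ p (fun D hD b => hmeas D (maxNull_subset hD) b)
    {k₁} (fun k => 1/(k:ℝ)) (fun _ => γ * α)
    (fun b k hk => by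
      rw [Finset.mem_singleton] at hk
      exact hsuper b (γ * α) hγα)
    F
    (fun D hD ω hω => by
      have hcount := Qagg_le_count hB hγ.1 hγ.2 hα.2 p D ω hω
      rw [Finset.sum_singleton, sum_indicator_count]
      have hreal : 1 ≤ (1/(k₁:ℝ)) *
          ((Finset.univ.filter (fun b => p D b ω ≤ γ * α)).card : ℝ) := by
        rw [one_div, ← div_eq_inv_mul, le_div_iff₀ hk1R, one_mul]
        exact_mod_cast hcount
      have := one_le_ofReal_sum (K := {k₁}) (w := fun k => 1/(k:ℝ))
        (N := fun _ => (Finset.univ.filter (fun b => p D b ω ≤ γ * α)).card)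
        (fun k hk => by positivity)
        (by rwa [Finset.sum_singleton])
      rwa [Finset.sum_singleton] at this)
  refine le_trans (measure_mono (Set.inter_subset_inter_left A hincl)) (hcore.trans ?_)
  rw [sum_ofReal_mul_eq (fun k => 1/(k:ℝ)) (fun _ => γ * α) B
    (fun k hk => by positivity) (fun k hk => (mul_pos hγ.1 hα.1).le),
    Finset.sum_singleton]
  apply ENNReal.ofReal_le_ofReal
  rw [one_div, ← div_eq_inv_mul, div_le_iff₀ hk1R]
  calc (B:ℝ) * (γ * α) = (γ * B) * α := by ring
    _ ≤ (k₁:ℝ) * α := mul_le_mul_of_nonneg_right (Nat.le_ceil _) hα.1.le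
    _ = α * k₁ := mul_comm _ _

lemma part2_bound {ι Ω : Type*} [DecidableEq ι] [MeasurableSpace Ω] (μ : Measure Ω)
    {A : Set Ω} (𝒯 : Finset (Finset ι)) (S₀ : Finset ι)
    {B : ℕ} (hB : 0 < B) (p : Finset ι → Fin B → Ω → ℝ)
    (hmeas : ∀ C ∈ 𝒯, ∀ b : Fin B, Measurable (p C b))
    (hp01 : ∀ C ∈ 𝒯, ∀ (b : Fin B) (ω : Ω), p C b ω ∈ Set.Icc (0:ℝ) 1)
    (hsuper : ∀ b : Fin B, ∀ t ∈ Set.Ioo (0:ℝ) 1,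
      ∑ C ∈ maxNullClusters 𝒯 S₀, μ ({ω | p C b ω ≤ t} ∩ A) ≤ ENNReal.ofReal t)
    {γmin α : ℝ} (hγmin : γmin ∈ Set.Ioo (0:ℝ) 1) (hα : α ∈ Set.Ioo (0:ℝ) 1) :
    μ ({ω | ∃ C ∈ nullClusters 𝒯 S₀, Phier 𝒯 p γmin C ω ≤ α} ∩ A) ≤
      ENNReal.ofReal α := by
  classical
  have hlog : Real.log γmin < 0 := Real.log_neg hγmin.1 hγmin.2
  have hfac : (0:ℝ) < 1 - Real.log γmin := by linarith
  have hfac1 : (1:ℝ) < 1 - Real.log γmin := by linarith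
  set u : ℝ := α / (1 - Real.log γmin) with hu
  have hu0 : 0 < u := div_pos hα.1 hfac
  have hu1 : u < 1 := by
    rw [hu, div_lt_one hfac]
    linarith [hα.2]
  set k₀ : ℕ := ⌊γmin * B⌋₊ + 1 with hk₀
  have hk₀1 : 1 ≤ k₀ := Nat.le_add_left 1 _
  have hBR : (0:ℝ) < B := by exact_mod_cast hB
  have hk₀B : k₀ ≤ B := by
    rw [hk₀, Nat.add_one_le_iff, Nat.floor_lt (mul_nonneg hγmin.1.le (Nat.cast_nonneg B))]
    calc γmin * B < 1 * B := mul_lt_mul_of_pos_right hγmin.2 hBR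
      _ = B := one_mul _
  have hlb : γmin * B ≤ k₀ := by
    rw [hk₀]
    push_cast
    linarith [Nat.lt_floor_add_one (γmin * (B:ℝ))]
  set F : Finset ι → Set Ω := fun D => {ω | Pval p γmin D ω ≤ α} with hF
  have hincl : {ω | ∃ C ∈ nullClusters 𝒯 S₀, Phier 𝒯 p γmin C ω ≤ α} ⊆
      ⋃ D ∈ maxNullClusters 𝒯 S₀, F D := by
    intro ω hω
    simp only [Set.mem_setOf_eq] at hω
    obtain ⟨C, hC, hQ⟩ := hω
    obtain ⟨D, hD, hCD⟩ := exists_maxNull hC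
    have hD𝒯 : D ∈ 𝒯 := maxNull_subset hD
    have hmem : D ∈ insert C (𝒯.filter (fun D' => C ⊆ D')) :=
      Finset.mem_insert_of_mem (Finset.mem_filter.mpr ⟨hD𝒯, hCD⟩)
    have hle := Finset.le_sup' (fun D' => Pval p γmin D' ω) hmem
    exact Set.mem_biUnion hD (le_trans hle hQ)
  -- for every `u' ∈ (u, 1)` we get a bound
  have hmain : ∀ u', u < u' → u' < 1 →
      μ ({ω | ∃ C ∈ nullClusters 𝒯 S₀, Phier 𝒯 p γmin C ω ≤ α} ∩ A) ≤
        ENNReal.ofReal (u' * (1 - Real.log γmin)) := by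
    intro u' huu' hu'1
    have hu'0 : 0 < u' := hu0.trans huu'
    have hcore := core_bound μ p (fun D hD b => hmeas D (maxNull_subset hD) b)
      (Finset.Icc k₀ B) (wt B) (fun k => (k:ℝ) * u' / B)
      (fun b k hk => by
        rw [Finset.mem_Icc] at hk
        have hkpos : (0:ℝ) < k := by
          exact_mod_cast Nat.lt_of_lt_of_le Nat.zero_lt_one (hk₀1.trans hk.1)
        refine hsuper b _ ⟨by positivity, ?_⟩
        rw [div_lt_one hBR]
        calc (k:ℝ) * u' ≤ (B:ℝ) * u' := by
              apply mul_le_mul_of_nonneg_right _ hu'0.le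
              exact_mod_cast hk.2
          _ < (B:ℝ) * 1 := by
              apply mul_lt_mul_of_pos_left hu'1 hBR
          _ = B := mul_one _)
      F
      (fun D hD ω hω => by
        have hD𝒯 : D ∈ 𝒯 := maxNull_subset hD
        have hp0 : ∀ b, 0 ≤ p D b ω := fun b => (hp01 D hD𝒯 b ω).1
        obtain ⟨k', ⟨hk'1, hk'B⟩, hk'count⟩ :=
          Pval_le_exists_k' hB hγmin hα huu' hu'1 p D ω hp0 hω
        set N : ℕ → ℕ := fun k =>
          (Finset.univ.filter (fun b => p D b ω ≤ (k:ℝ) * u' / B)).card with hN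
        have hmono : ∀ k l, k ≤ l → N k ≤ N l := by
          intro k l hkl
          apply count_mono
          have hklR : (k:ℝ) ≤ l := by exact_mod_cast hkl
          gcongr
        have hmemIcc : k' ∈ Finset.Icc k₀ B := Finset.mem_Icc.mpr ⟨hk'1, hk'B⟩
        have hreal := one_le_weighted hk₀1 hmemIcc N hmono hk'count
        have henn := one_le_ofReal_sum (K := Finset.Icc k₀ B) (w := wt B) (N := N)
          (fun k hk => wt_nonneg (hk₀1.trans (Finset.mem_Icc.mp hk).1)) hreal
        refine henn.trans (le_of_eq ?_)
        apply Finset.sum_congr rfl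
        intro k hk
        congr 1
        rw [sum_indicator_count (fun b => p D b) ((k:ℝ) * u' / B) ω])
    refine le_trans (measure_mono (Set.inter_subset_inter_left A hincl)) (hcore.trans ?_)
    rw [sum_ofReal_mul_eq (wt B) (fun k => (k:ℝ) * u' / B) B
      (fun k hk => wt_nonneg (hk₀1.trans (Finset.mem_Icc.mp hk).1))
      (fun k hk => by positivity)]
    exact ENNReal.ofReal_le_ofReal (numeric2 hk₀1 hk₀B hγmin.1 hlb hu'0.le)
  -- ε-argument
  apply ENNReal.le_of_forall_pos_le_add
  intro ε hε _
  have hεR : (0:ℝ) < ε := hε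
  set δ : ℝ := min ((ε:ℝ)/(1 - Real.log γmin)) ((1-u)/2) with hδ
  have hδ0 : 0 < δ := lt_min (div_pos hεR hfac) (by linarith)
  have h1 : u < u + δ := by linarith
  have h2 : u + δ < 1 := by
    have : δ ≤ (1-u)/2 := min_le_right _ _
    linarith
  refine (hmain (u + δ) h1 h2).trans ?_
  have heq : (u + δ) * (1 - Real.log γmin) = α + δ * (1 - Real.log γmin) := by
    have : u * (1 - Real.log γmin) = α := div_mul_cancel₀ α (ne_of_gt hfac)
    rw [add_mul, this]
  have hbound : δ * (1 - Real.log γmin) ≤ ε := by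
    have hδle : δ ≤ (ε:ℝ)/(1 - Real.log γmin) := min_le_left _ _
    calc δ * (1 - Real.log γmin) ≤ ((ε:ℝ)/(1 - Real.log γmin)) * (1 - Real.log γmin) :=
          mul_le_mul_of_nonneg_right hδle hfac.le
      _ = ε := div_mul_cancel₀ _ (ne_of_gt hfac)
  calc ENNReal.ofReal ((u + δ) * (1 - Real.log γmin))
      ≤ ENNReal.ofReal (α + (ε:ℝ)) := by
        apply ENNReal.ofReal_le_ofReal
        rw [heq]
        linarith
    _ ≤ ENNReal.ofReal α + ENNReal.ofReal (ε:ℝ) := ENNReal.ofReal_add_le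
    _ = ENNReal.ofReal α + ε := by rw [ENNReal.ofReal_coe_nnreal]

end Parts

/-- **Asymptotic FWER control** (Corollary 1 of Mandozzi–Bühlmann): if the screening
events `A n` have probability tending to one, then both families of hierarchically
adjusted p-values asymptotically control the familywise error rate at level `α`. -/
theorem asymptotic_fwer_control
    {ι : Type*} [DecidableEq ι]
    (Ω : ℕ → Type*) [mΩ : ∀ n, MeasurableSpace (Ω n)]
    (P : ∀ n, Measure (Ω n)) [∀ n, IsProbabilityMeasure (P n)]
    (V S₀ : ℕ → Finset ι) (𝒯 : ℕ → Finset (Finset ι))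
    (h𝒯 : ∀ n, IsHierarchy (V n) (𝒯 n)) (hS₀ : ∀ n, S₀ n ⊆ V n)
    (B : ℕ → ℕ) (hB : ∀ n, 1 ≤ B n)
    (p : ∀ n, Finset ι → Fin (B n) → Ω n → ℝ)
    (hmeas : ∀ n, ∀ C ∈ 𝒯 n, ∀ b : Fin (B n), Measurable (p n C b))
    (hp01 : ∀ n, ∀ C ∈ 𝒯 n, ∀ (b : Fin (B n)) (ω : Ω n), p n C b ω ∈ Set.Icc (0 : ℝ) 1)
    (A : ∀ n, Set (Ω n)) (hA : ∀ n, MeasurableSet (A n))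
    (hPA : Filter.Tendsto (fun n => P n (A n)) Filter.atTop (nhds 1))
    (hsuper : ∀ n, ∀ b : Fin (B n), ∀ t ∈ Set.Ioo (0 : ℝ) 1,
      ∑ C ∈ maxNullClusters (𝒯 n) (S₀ n), P n ({ω | p n C b ω ≤ t} ∩ A n)
        ≤ ENNReal.ofReal t)
    {γmin : ℝ} (hγmin : γmin ∈ Set.Ioo (0 : ℝ) 1)
    {γ α : ℝ} (hγ : γ ∈ Set.Ioo (0 : ℝ) 1) (hα : α ∈ Set.Ioo (0 : ℝ) 1) :
    Filter.limsup
        (fun n => P n {ω | ∃ C ∈ nullClusters (𝒯 n) (S₀ n), Qhier (𝒯 n) (p n) γ C ω ≤ α})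
        Filter.atTop ≤ ENNReal.ofReal α
      ∧ Filter.limsup
        (fun n => P n {ω | ∃ C ∈ nullClusters (𝒯 n) (S₀ n), Phier (𝒯 n) (p n) γmin C ω ≤ α})
        Filter.atTop ≤ ENNReal.ofReal α := by
  classical
  have hcompl : Filter.Tendsto (fun n => P n (A n)ᶜ) Filter.atTop (nhds 0) := by
    have h1 : ∀ n, P n (A n)ᶜ = 1 - P n (A n) := fun n => by
      rw [measure_compl (hA n) (measure_ne_top _ _), measure_univ]
    simp only [h1]
    have h2 : Filter.Tendsto (fun n => (1:ENNReal) - P n (A n)) Filter.atTop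
        (nhds (1 - 1)) :=
      ENNReal.Tendsto.sub tendsto_const_nhds hPA (Or.inl ENNReal.one_ne_top)
    simpa using h2
  have key : ∀ (E : ∀ n, Set (Ω n)), (∀ n, P n (E n ∩ A n) ≤ ENNReal.ofReal α) →
      Filter.limsup (fun n => P n (E n)) Filter.atTop ≤ ENNReal.ofReal α := by
    intro E hE
    have hle : ∀ n, P n (E n) ≤ ENNReal.ofReal α + P n (A n)ᶜ := by
      intro n
      have hsub : E n ⊆ (E n ∩ A n) ∪ (A n)ᶜ := by
        intro ω hω
        by_cases h : ω ∈ A n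
        · exact Or.inl ⟨hω, h⟩
        · exact Or.inr h
      calc P n (E n) ≤ P n ((E n ∩ A n) ∪ (A n)ᶜ) := measure_mono hsub
        _ ≤ P n (E n ∩ A n) + P n (A n)ᶜ := measure_union_le _ _
        _ ≤ ENNReal.ofReal α + P n (A n)ᶜ := add_le_add_left (hE n) _
    calc Filter.limsup (fun n => P n (E n)) Filter.atTop
        ≤ Filter.limsup (fun n => ENNReal.ofReal α + P n (A n)ᶜ) Filter.atTop :=
          Filter.limsup_le_limsup (Filter.Eventually.of_forall hle)
      _ = ENNReal.ofReal α := by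
          have ht : Filter.Tendsto (fun n => ENNReal.ofReal α + P n (A n)ᶜ)
              Filter.atTop (nhds (ENNReal.ofReal α + 0)) :=
            Filter.Tendsto.const_add _ hcompl
          rw [add_zero] at ht
          exact ht.limsup_eq
  constructor
  · exact key (fun n => {ω | ∃ C ∈ nullClusters (𝒯 n) (S₀ n), Qhier (𝒯 n) (p n) γ C ω ≤ α})
      (fun n => part1_bound (P n) (𝒯 n) (S₀ n) (hB n) (p n) (hmeas n) (hsuper n) hγ hα)
  · exact key (fun n => {ω | ∃ C ∈ nullClusters (𝒯 n) (S₀ n), Phier (𝒯 n) (p n) γmin C ω ≤ α})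
      (fun n => part2_bound (P n) (𝒯 n) (S₀ n) (hB n) (p n) (hmeas n) (hp01 n) (hsuper n)
        hγmin hα)
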